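/- Elliptical potential bound: Let x_1,…,x_T ∈ ℝ^d satisfy ‖x_t‖₂ ≤ B for all t ∈ {1,…,T}, and let λ > 0 with λ ≥ B². Define Σ_0 = λ·I_d and Σ_t = Σ_{τ=1}^t x_τ x_τᵀ + λ·I_d for t ∈ {1,…,T} (each Σ_t is positive definite, hence invertible). Then Σ_{t=1}^T sqrt( x_tᵀ Σ_{t−1}⁻¹ x_t ) ≤ sqrt( 2·d·T·log(1 + T·B²/(λ·d)) ). -/

import Mathlib

open Finset Matrix

/-- Regularized feature covariance matrix `Σ_t = ∑_{τ=1}^t x_τ x_τᵀ + λ I`. -/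
noncomputable def covMat {d : ℕ} (x : ℕ → Fin d → ℝ) (lam : ℝ) (t : ℕ) :
    Matrix (Fin d) (Fin d) ℝ :=
  (∑ τ ∈ Finset.Icc 1 t, Matrix.vecMulVec (x τ) (x τ)) +
    lam • (1 : Matrix (Fin d) (Fin d) ℝ)


lemma vecMulVec_mulVec' {d : ℕ} (v y : Fin d → ℝ) :
    vecMulVec v v *ᵥ y = (v ⬝ᵥ y) • v := by
  ext i
  simp [mulVec, vecMulVec_apply, dotProduct, Finset.sum_mul, Finset.mul_sum, mul_assoc,
    mul_comm, mul_left_comm]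

lemma posSemidef_vecMulVec {d : ℕ} (v : Fin d → ℝ) : (vecMulVec v v).PosSemidef := by
  refine Matrix.PosSemidef.of_dotProduct_mulVec_nonneg ?_ ?_
  · ext i j; simp [vecMulVec_apply, mul_comm, IsHermitian]
  · intro y
    rw [vecMulVec_mulVec']
    simp only [star_trivial, dotProduct_smul, smul_eq_mul, dotProduct_comm y v]
    exact mul_self_nonneg _

lemma posDef_smul_one {d : ℕ} {lam : ℝ} (h : 0 < lam) :
    (lam • (1 : Matrix (Fin d) (Fin d) ℝ)).PosDef := by
  rw [smul_one_eq_diagonal]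
  exact Matrix.PosDef.diagonal fun _ => h

lemma covMat_posDef {d : ℕ} (x : ℕ → Fin d → ℝ) {lam : ℝ} (h : 0 < lam) (t : ℕ) :
    (covMat x lam t).PosDef := by
  refine Matrix.PosDef.posSemidef_add ?_ (posDef_smul_one h)
  exact Finset.sum_induction _ _ (fun a b ha hb => ha.add hb) (Matrix.PosSemidef.zero)
    (fun τ _ => posSemidef_vecMulVec (x τ))

lemma covMat_succ {d : ℕ} (x : ℕ → Fin d → ℝ) (lam : ℝ) (t : ℕ) :
    covMat x lam (t + 1) = covMat x lam t + vecMulVec (x (t+1)) (x (t+1)) := by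
  unfold covMat
  rw [Finset.sum_Icc_succ_top (by omega)]
  rw [add_right_comm]

lemma covMat_det_succ {d : ℕ} (x : ℕ → Fin d → ℝ) {lam : ℝ} (h : 0 < lam) (t : ℕ) :
    (covMat x lam (t + 1)).det =
      (covMat x lam t).det * (1 + x (t+1) ⬝ᵥ (covMat x lam t)⁻¹ *ᵥ x (t+1)) := by
  rw [covMat_succ]
  set A := covMat x lam t with hAdef
  have hA : A.PosDef := covMat_posDef x h t
  have key : A + vecMulVec (x (t+1)) (x (t+1))
      = A * (1 + replicateCol (Fin 1) (A⁻¹ *ᵥ x (t+1)) * replicateRow (Fin 1) (x (t+1))) := by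
    rw [Matrix.mul_add, Matrix.mul_one, replicateCol_mulVec, ← Matrix.mul_assoc, ← Matrix.mul_assoc,
      Matrix.mul_nonsing_inv _ (hA.det_pos.ne'.isUnit), Matrix.one_mul,
      vecMulVec_eq (Fin 1)]
    rfl
  rw [key, det_mul]
  congr 1
  exact det_one_add_replicateCol_mul_replicateRow _ _

lemma covMat_quad_lower {d : ℕ} (x : ℕ → Fin d → ℝ) (lam : ℝ) (t : ℕ) (y : Fin d → ℝ) :
    lam * (y ⬝ᵥ y) ≤ y ⬝ᵥ covMat x lam t *ᵥ y := by
  unfold covMat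
  rw [add_mulVec, dotProduct_add, smul_mulVec, one_mulVec, dotProduct_smul, smul_eq_mul]
  have h0 : (0:ℝ) ≤ y ⬝ᵥ (∑ τ ∈ Finset.Icc 1 t, vecMulVec (x τ) (x τ)) *ᵥ y := by
    have := (Finset.sum_induction _ Matrix.PosSemidef
      (fun a b (ha : Matrix.PosSemidef a) hb => ha.add hb) (Matrix.PosSemidef.zero)
      (fun τ (_ : τ ∈ Finset.Icc 1 t) => posSemidef_vecMulVec (x τ))).dotProduct_mulVec_nonneg y
    simpa using this
  linarith

lemma dot_cauchy {d : ℕ} (y v : Fin d → ℝ) : (y ⬝ᵥ v)^2 ≤ (y ⬝ᵥ y) * (v ⬝ᵥ v) := by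
  have := Finset.sum_mul_sq_le_sq_mul_sq Finset.univ y v
  simpa [dotProduct, sq] using this

lemma quad_inv_le {d : ℕ} {A : Matrix (Fin d) (Fin d) ℝ} (hA : A.PosDef) {lam : ℝ}
    (hlam : 0 < lam) (hlow : ∀ y, lam * (y ⬝ᵥ y) ≤ y ⬝ᵥ A *ᵥ y) (v : Fin d → ℝ) :
    v ⬝ᵥ A⁻¹ *ᵥ v ≤ (v ⬝ᵥ v) / lam := by
  set y := A⁻¹ *ᵥ v with hy
  have hAy : A *ᵥ y = v := by
    rw [hy, Matrix.mulVec_mulVec, Matrix.mul_nonsing_inv _ hA.det_pos.ne'.isUnit, one_mulVec]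
  have h1 : lam * (y ⬝ᵥ y) ≤ y ⬝ᵥ v := by
    have := hlow y; rwa [hAy] at this
  have h2 : (y ⬝ᵥ v)^2 ≤ (y ⬝ᵥ y) * (v ⬝ᵥ v) := dot_cauchy y v
  have hvy : v ⬝ᵥ A⁻¹ *ᵥ v = y ⬝ᵥ v := by rw [← hy, dotProduct_comm]
  rw [hvy, div_eq_inv_mul, ← mul_le_mul_iff_right₀ hlam, ← mul_assoc, mul_inv_cancel₀ hlam.ne',
    one_mul]
  have hn : (0:ℝ) ≤ v ⬝ᵥ v := by simpa using dotProduct_star_self_nonneg (R:=ℝ) v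
  nlinarith [mul_le_mul_of_nonneg_right h1 hn, mul_le_mul_of_nonneg_left h2 hlam.le]

lemma covMat_log_det_sum {d : ℕ} (x : ℕ → Fin d → ℝ) {lam : ℝ} (h : 0 < lam) (n : ℕ) :
    ∑ t ∈ Finset.Icc 1 n, Real.log (1 + x t ⬝ᵥ (covMat x lam (t-1))⁻¹ *ᵥ x t)
      = Real.log (covMat x lam n).det - Real.log (covMat x lam 0).det := by
  induction n with
  | zero => simp
  | succ n ih =>
    rw [Finset.sum_Icc_succ_top (by omega), ih]
    have h1 : (0:ℝ) < (covMat x lam n).det := (covMat_posDef x h n).det_pos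
    have h2 : (0:ℝ) < 1 + x (n+1) ⬝ᵥ (covMat x lam n)⁻¹ *ᵥ x (n+1) := by
      have := ((covMat_posDef x h n).inv).posSemidef.dotProduct_mulVec_nonneg (x (n+1))
      simp only [star_trivial] at this
      linarith
    rw [covMat_det_succ x h n, Real.log_mul h1.ne' h2.ne']
    simp only [Nat.add_sub_cancel]
    ring

lemma covMat_trace {d : ℕ} (x : ℕ → Fin d → ℝ) (lam : ℝ) (T : ℕ) :
    (covMat x lam T).trace = (∑ τ ∈ Finset.Icc 1 T, x τ ⬝ᵥ x τ) + lam * d := by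
  unfold covMat
  rw [Matrix.trace_add, Matrix.trace_sum, Matrix.trace_smul, Matrix.trace_one]
  simp [Matrix.trace, Matrix.diag, vecMulVec_apply, dotProduct, Fintype.card_fin]

lemma trace_eq_sum_eigenvalues {d : ℕ} {A : Matrix (Fin d) (Fin d) ℝ}
    (hA : A.IsHermitian) : A.trace = ∑ i, hA.eigenvalues i := by
  exact hA.trace_eq_sum_eigenvalues

lemma det_le_trace_pow {d : ℕ} (hd : 1 ≤ d) {A : Matrix (Fin d) (Fin d) ℝ}
    (hA : A.PosDef) : A.det ≤ (A.trace / d) ^ d := by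
  have hd0 : (d:ℝ) ≠ 0 := Nat.cast_ne_zero.mpr (by omega)
  set ev := hA.1.eigenvalues with hev
  have hpos : ∀ i, 0 < ev i := fun i => hA.eigenvalues_pos i
  have hdet : A.det = ∏ i, ev i := by
    rw [hA.1.det_eq_prod_eigenvalues]; norm_num; rfl
  have htr : A.trace = ∑ i, ev i := trace_eq_sum_eigenvalues hA.1
  have amgm := Real.geom_mean_le_arith_mean_weighted Finset.univ
    (fun _ => (d:ℝ)⁻¹) ev (fun i _ => by positivity)
    (by simp [Finset.sum_const, hd0]) (fun i _ => (hpos i).le)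
  have hprod : (∏ i, (ev i) ^ ((d:ℝ)⁻¹)) ^ d = ∏ i, ev i := by
    rw [← Finset.prod_pow]
    refine Finset.prod_congr rfl fun i _ => ?_
    rw [← Real.rpow_natCast ((ev i) ^ ((d:ℝ)⁻¹)) d, ← Real.rpow_mul (hpos i).le,
      inv_mul_cancel₀ hd0, Real.rpow_one]
  calc A.det = (∏ i, (ev i) ^ ((d:ℝ)⁻¹)) ^ d := by rw [hprod, hdet]
    _ ≤ (A.trace / d) ^ d := by
        apply pow_le_pow_left₀ (Finset.prod_nonneg fun i _ => Real.rpow_nonneg (hpos i).le _)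
        calc (∏ i, (ev i) ^ ((d:ℝ)⁻¹)) ≤ ∑ i, (d:ℝ)⁻¹ * ev i := amgm
          _ = A.trace / d := by rw [htr, ← Finset.mul_sum]; ring

/-- **Elliptical potential bound.** -/
theorem elliptical_potential
    (d T : ℕ) (hd : 1 ≤ d) (hT : 1 ≤ T)
    (x : ℕ → Fin d → ℝ) (B : ℝ)
    (hB : ∀ t ∈ Finset.Icc 1 T, Real.sqrt (∑ i, x t i ^ 2) ≤ B)
    (lam : ℝ) (hlam : 0 < lam) (hlamB : B ^ 2 ≤ lam) :
    ∑ t ∈ Finset.Icc 1 T,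
        Real.sqrt (x t ⬝ᵥ (covMat x lam (t - 1))⁻¹ *ᵥ x t)
      ≤ Real.sqrt (2 * d * T * Real.log (1 + T * B ^ 2 / (lam * d))) := by
  have hd0 : (d:ℝ) ≠ 0 := Nat.cast_ne_zero.mpr (by omega)
  have hdpos : (0:ℝ) < d := by positivity
  set u : ℕ → ℝ := fun t => x t ⬝ᵥ (covMat x lam (t - 1))⁻¹ *ᵥ x t with hu
  have hxB : ∀ t ∈ Finset.Icc 1 T, x t ⬝ᵥ x t ≤ B^2 := by
    intro t ht
    have h2 : x t ⬝ᵥ x t = ∑ i, x t i ^2 := by simp [dotProduct, sq]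
    have h3 : (0:ℝ) ≤ ∑ i, x t i ^2 := by positivity
    rw [h2, ← Real.sq_sqrt h3]
    exact pow_le_pow_left₀ (Real.sqrt_nonneg _) (hB t ht) 2
  have hunn : ∀ t, 0 ≤ u t := fun t => by
    have := ((covMat_posDef x hlam (t-1)).inv).posSemidef.dotProduct_mulVec_nonneg (x t)
    simpa using this
  have hu1 : ∀ t ∈ Finset.Icc 1 T, u t ≤ 1 := by
    intro t ht
    have h1 := quad_inv_le (covMat_posDef x hlam (t-1)) hlam
      (covMat_quad_lower x lam (t-1)) (x t)
    have h2 : (x t ⬝ᵥ x t)/lam ≤ 1 := by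
      rw [div_le_one hlam]; exact le_trans (hxB t ht) hlamB
    exact le_trans h1 h2
  have hlog : ∀ t ∈ Finset.Icc 1 T, u t ≤ 2 * Real.log (1 + u t) := by
    intro t ht
    have h0 := hunn t
    have h1 := hu1 t ht
    have hpos : (0:ℝ) < 1 + u t := by linarith
    have hl := Real.log_le_sub_one_of_pos (inv_pos.mpr hpos)
    rw [Real.log_inv] at hl
    have hge : u t / (1 + u t) ≤ Real.log (1 + u t) := by
      have heq : 1 - (1 + u t)⁻¹ = u t / (1 + u t) := by field_simp; ring
      linarith [heq ▸ (by linarith : 1 - (1 + u t)⁻¹ ≤ Real.log (1 + u t))]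
    have hhalf : u t / 2 ≤ u t / (1 + u t) :=
      div_le_div_of_nonneg_left h0 hpos (by linarith)
    linarith
  have hsum : ∑ t ∈ Finset.Icc 1 T, u t
      ≤ 2 * (Real.log (covMat x lam T).det - Real.log (covMat x lam 0).det) := by
    calc ∑ t ∈ Finset.Icc 1 T, u t ≤ ∑ t ∈ Finset.Icc 1 T, 2 * Real.log (1 + u t) :=
          Finset.sum_le_sum hlog
      _ = 2 * ∑ t ∈ Finset.Icc 1 T, Real.log (1 + u t) := by rw [Finset.mul_sum]
      _ = _ := by rw [covMat_log_det_sum x hlam T]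
  have htr : (covMat x lam T).trace ≤ lam * d + T * B^2 := by
    rw [covMat_trace]
    have h1 : ∑ τ ∈ Finset.Icc 1 T, x τ ⬝ᵥ x τ ≤ ∑ τ ∈ Finset.Icc 1 T, B^2 :=
      Finset.sum_le_sum hxB
    rw [Finset.sum_const, Nat.card_Icc] at h1
    simp only [Nat.add_sub_cancel, nsmul_eq_mul] at h1
    linarith
  have hdet0 : (covMat x lam 0).det = lam ^ d := by
    unfold covMat
    rw [Finset.Icc_eq_empty (by omega), Finset.sum_empty, zero_add, Matrix.det_smul,
      Matrix.det_one, mul_one, Fintype.card_fin]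
  have hapos : (0:ℝ) < lam * d + T * B^2 := by positivity
  have hdetT : (covMat x lam T).det ≤ ((lam * d + T * B^2)/d)^d := by
    refine le_trans (det_le_trace_pow hd (covMat_posDef x hlam T)) ?_
    apply pow_le_pow_left₀ (div_nonneg ?_ hdpos.le) (by gcongr)
    have := (covMat_posDef x hlam T).det_pos
    nlinarith [trace_eq_sum_eigenvalues (covMat_posDef x hlam T).1,
      Finset.sum_nonneg (fun i (_ : i ∈ Finset.univ) =>
        ((covMat_posDef x hlam T).eigenvalues_pos i).le)]
  have hlogdet : Real.log (covMat x lam T).det ≤ d * Real.log ((lam * d + T * B^2)/d) := by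
    calc Real.log (covMat x lam T).det ≤ Real.log (((lam * d + T * B^2)/d)^d) :=
          (Real.log_le_log_iff (covMat_posDef x hlam T).det_pos (by positivity)).mpr hdetT
      _ = d * Real.log ((lam * d + T * B^2)/d) := by rw [Real.log_pow]
  have hsplit : Real.log ((lam * d + T * B^2)/d) - Real.log lam
      = Real.log (1 + T * B^2/(lam * d)) := by
    have harg : 1 + (T:ℝ) * B^2/(lam * d) = (lam * d + T * B^2)/(lam * d) := by
      field_simp
    rw [harg, Real.log_div hapos.ne' hd0,
      Real.log_div hapos.ne' (mul_ne_zero hlam.ne' hd0), Real.log_mul hlam.ne' hd0]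
    ring
  have hfin : ∑ t ∈ Finset.Icc 1 T, u t ≤ 2 * d * Real.log (1 + T * B^2/(lam * d)) := by
    have h0 : Real.log (covMat x lam 0).det = d * Real.log lam := by
      rw [hdet0, Real.log_pow]
    calc ∑ t ∈ Finset.Icc 1 T, u t
        ≤ 2 * (Real.log (covMat x lam T).det - Real.log (covMat x lam 0).det) := hsum
      _ ≤ 2 * (d * Real.log ((lam * d + T * B^2)/d) - d * Real.log lam) := by
          rw [h0]; linarith
      _ = 2 * d * (Real.log ((lam * d + T * B^2)/d) - Real.log lam) := by ring
      _ = 2 * d * Real.log (1 + T * B^2/(lam * d)) := by rw [hsplit]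
  have hcs : (∑ t ∈ Finset.Icc 1 T, Real.sqrt (u t))^2
      ≤ (T:ℝ) * ∑ t ∈ Finset.Icc 1 T, u t := by
    have := Finset.sum_sq_le_sum_mul_sum_of_sq_eq_mul (Finset.Icc 1 T)
      (r := fun t => Real.sqrt (u t)) (f := fun _ => (1:ℝ)) (g := u)
      (fun _ _ => zero_le_one) (fun t _ => hunn t)
      (fun t _ => by rw [Real.sq_sqrt (hunn t), one_mul])
    rw [Finset.sum_const, Nat.card_Icc] at this
    simpa [Nat.add_sub_cancel] using this
  show ∑ t ∈ Finset.Icc 1 T, Real.sqrt (u t) ≤ _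
  rw [Real.le_sqrt (Finset.sum_nonneg fun t _ => Real.sqrt_nonneg _)
    (by nlinarith [hfin, Finset.sum_nonneg fun t (_ : t ∈ Finset.Icc 1 T) => hunn t,
      (by positivity : (0:ℝ) ≤ (T:ℝ))])]
  calc (∑ t ∈ Finset.Icc 1 T, Real.sqrt (u t))^2
      ≤ (T:ℝ) * ∑ t ∈ Finset.Icc 1 T, u t := hcs
    _ ≤ (T:ℝ) * (2 * d * Real.log (1 + T * B^2/(lam * d))) := by
        apply mul_le_mul_of_nonneg_left hfin (by positivity)
    _ = 2 * d * T * Real.log (1 + T * B^2/(lam * d)) := by ring
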